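/- Let X be a free ultrafilter on ω, viewed as a subspace of the Cantor space 2^ω via characteristic functions. Then Alice has a winning strategy in the grouped Menger game played on X. In particular, using the covers U_n = { U_{[n,k)} : k > n } where U_{[n,k)} = { a ⊆ ω : a ∩ [n,k) ≠ ∅ }, for any increasing sequence 0 = i_0 < i_1 < i_2 < ⋯ of natural numbers, X is not contained in ⋃_{k∈ω} ( U_{[i_{2k}, i_{2k+1})} ∩ U_{[i_{2k+1}, i_{2k+2})} ). -/

import Mathlib

open Set

/-- `U` is an open cover of the space `X`. -/
def IsOpenCover {X : Type*} [TopologicalSpace X] (U : Set (Set X)) : Prop :=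
  (∀ u ∈ U, IsOpen u) ∧ ⋃₀ U = univ

/-- Subround boundaries in the grouped Menger game: `groupedL len F n` is the
index of the first subround of round `n`, when Bob plays `F` and Alice's group
lengths are given by the strategy `len` applied to the current history. -/
def groupedL {X : Type*} [TopologicalSpace X]
    (len : List (Finset (Set X)) → ℕ) (F : ℕ → Finset (Set X)) : ℕ → ℕ
  | 0 => 0
  | n + 1 =>
      groupedL len F n +
        len (List.ofFn fun i : Fin (groupedL len F n) => F i)

/-- Alice has a winning strategy in the grouped Menger game on `X`: she chooses
group lengths `len h > 0` and open covers `A h` depending on the history `h` of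
Bob's moves, so that for every legal play of Bob the grouped intersections fail
to cover `X`. -/
def AliceWinningStrategyGroupedMenger (X : Type*) [TopologicalSpace X] : Prop :=
  ∃ len : List (Finset (Set X)) → ℕ, ∃ A : List (Finset (Set X)) → Set (Set X),
    (∀ h, 0 < len h) ∧ (∀ h, IsOpenCover (A h)) ∧
    ∀ F : ℕ → Finset (Set X),
      (∀ n, ↑(F n) ⊆ A (List.ofFn fun i : Fin n => F i)) →
      (⋃ n, ⋂ i ∈ Finset.Ico (groupedL len F n) (groupedL len F (n + 1)),
        ⋃₀ ((F i : Set (Set X)))) ≠ univ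

/-! ### Auxiliary definitions -/

/-- The key combinatorial lemma: the union of the even intervals and its
complement; one belongs to the ultrafilter and avoids the opposite intervals. -/
lemma uf_key (U : Ultrafilter ℕ) (i : ℕ → ℕ) (hi : StrictMono i) :
    ∃ a ∈ U, ∀ k : ℕ,
      a ∩ Set.Ico (i (2 * k)) (i (2 * k + 1)) = ∅ ∨
      a ∩ Set.Ico (i (2 * k + 1)) (i (2 * k + 2)) = ∅ := by
  set a : Set ℕ := ⋃ k, Set.Ico (i (2 * k)) (i (2 * k + 1)) with ha
  by_cases hmem : a ∈ U
  · refine ⟨a, hmem, fun k => Or.inr ?_⟩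
    rw [Set.eq_empty_iff_forall_notMem]
    rintro n ⟨hna, hn1, hn2⟩
    rw [ha, Set.mem_iUnion] at hna
    obtain ⟨k', hk'1, hk'2⟩ := hna
    rcases lt_trichotomy (2 * k') (2 * k + 1) with h | h | h
    · have : 2 * k' + 1 ≤ 2 * k + 1 := by omega
      exact absurd (lt_of_lt_of_le hk'2 (le_trans (hi.monotone this) hn1)) (lt_irrefl n)
    · omega
    · have : 2 * k + 2 ≤ 2 * k' := by omega
      exact absurd (lt_of_lt_of_le hn2 (le_trans (hi.monotone this) hk'1)) (lt_irrefl n)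
  · refine ⟨aᶜ, Ultrafilter.compl_mem_iff_notMem.2 hmem, fun k => Or.inl ?_⟩
    rw [Set.eq_empty_iff_forall_notMem]
    rintro n ⟨hna, hn⟩
    exact hna (Set.mem_iUnion.2 ⟨k, hn⟩)

/-- The ultrafilter as a subspace of Cantor space. -/
abbrev ufSpace (U : Ultrafilter ℕ) : Set (ℕ → Bool) := {f : ℕ → Bool | {n | f n = true} ∈ U}

/-- Basic open sets: functions hitting `true` on `[n, k)`. -/
def ufV (U : Ultrafilter ℕ) (n k : ℕ) : Set (ufSpace U) :=
  {f | ∃ j, n ≤ j ∧ j < k ∧ (f : ℕ → Bool) j = true}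

/-- The open cover played by Alice. -/
def ufA (U : Ultrafilter ℕ) (n : ℕ) : Set (Set (ufSpace U)) :=
  {u | ∃ k, n < k ∧ u = ufV U n k}

lemma ufV_open (U : Ultrafilter ℕ) (n k : ℕ) : IsOpen (ufV U n k) := by
  have : ufV U n k = ⋃ j, ⋃ (_ : n ≤ j ∧ j < k),
      ((fun f : ufSpace U => (f : ℕ → Bool) j) ⁻¹' {true}) := by
    ext f
    simp [ufV, Set.mem_iUnion]
    tauto
  rw [this]
  refine isOpen_iUnion fun j => isOpen_iUnion fun _ => ?_
  exact ((continuous_apply j).comp continuous_subtype_val).isOpen_preimage _ (isOpen_discrete _)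

lemma ufV_mono (U : Ultrafilter ℕ) (n : ℕ) {k k' : ℕ} (h : k ≤ k') :
    ufV U n k ⊆ ufV U n k' := by
  rintro f ⟨j, h1, h2, h3⟩
  exact ⟨j, h1, lt_of_lt_of_le h2 h, h3⟩

lemma ufA_cover (U : Ultrafilter ℕ) (hfree : ∀ a ∈ U, a.Infinite) (n : ℕ) :
    IsOpenCover (ufA U n) := by
  constructor
  · rintro u ⟨k, _, rfl⟩; exact ufV_open U n k
  · rw [Set.eq_univ_iff_forall]
    intro f
    obtain ⟨j, hj1, hj2⟩ := (hfree _ f.2).exists_gt n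
    exact ⟨ufV U n (j + 1), ⟨j + 1, by omega, rfl⟩, j, le_of_lt hj2, by omega, hj1⟩

-- The bound function: given the current index `n` and Bob's move `F`, the next
-- index, chosen so that `⋃₀ F ⊆ ufV U n (ufBnd U n F)` whenever `F` is legal.
open Classical in
noncomputable def ufBnd (U : Ultrafilter ℕ) (n : ℕ) (F : Finset (Set (ufSpace U))) : ℕ :=
  if h : ∃ k, n < k ∧ ⋃₀ (F : Set (Set (ufSpace U))) ⊆ ufV U n k then h.choose else n + 1

lemma ufBnd_gt (U : Ultrafilter ℕ) (n : ℕ) (F : Finset (Set (ufSpace U))) :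
    n < ufBnd U n F := by
  unfold ufBnd
  split
  · next h => exact h.choose_spec.1
  · omega

lemma ufBnd_spec (U : Ultrafilter ℕ) (n : ℕ) {F : Finset (Set (ufSpace U))}
    (hF : ↑F ⊆ ufA U n) :
    ⋃₀ (F : Set (Set (ufSpace U))) ⊆ ufV U n (ufBnd U n F) := by
  have hex : ∃ k, n < k ∧ ⋃₀ (F : Set (Set (ufSpace U))) ⊆ ufV U n k := by
    classical
    induction F using Finset.induction with
    | empty => exact ⟨n + 1, by omega, by simp⟩
    | insert u F' hu ih =>
      obtain ⟨k, hk1, hk2⟩ :=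
        ih (fun v hv => hF (Finset.mem_coe.2 (Finset.mem_insert_of_mem (Finset.mem_coe.1 hv))))
      obtain ⟨k', hk'1, hk'2⟩ := hF (Finset.mem_coe.2 (Finset.mem_insert_self u F'))
      refine ⟨max k k', by omega, ?_⟩
      rw [Finset.coe_insert, Set.sUnion_insert]
      refine Set.union_subset ?_ (hk2.trans (ufV_mono U n (le_max_left _ _)))
      rw [hk'2]
      exact ufV_mono U n (le_max_right _ _)
  rw [ufBnd, dif_pos hex]
  exact hex.choose_spec.2

/-- The sequence of indices arising along a play `F` of Bob. -/
noncomputable def ufSeq (U : Ultrafilter ℕ) (F : ℕ → Finset (Set (ufSpace U))) (n : ℕ) : ℕ :=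
  (List.ofFn fun i : Fin n => F i).foldl (ufBnd U) 0

lemma ufSeq_zero (U : Ultrafilter ℕ) (F : ℕ → Finset (Set (ufSpace U))) :
    ufSeq U F 0 = 0 := rfl

lemma ufSeq_succ (U : Ultrafilter ℕ) (F : ℕ → Finset (Set (ufSpace U))) (n : ℕ) :
    ufSeq U F (n + 1) = ufBnd U (ufSeq U F n) (F n) := by
  rw [ufSeq, List.ofFn_succ', List.concat_eq_append, List.foldl_concat]
  rfl

lemma ufSeq_strictMono (U : Ultrafilter ℕ) (F : ℕ → Finset (Set (ufSpace U))) :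
    StrictMono (ufSeq U F) := by
  apply strictMono_nat_of_lt_succ
  intro n
  rw [ufSeq_succ]
  exact ufBnd_gt U _ _

/-- A free ultrafilter on `ω`, viewed as a subspace of the Cantor space via
characteristic functions, is a space on which Alice has a winning strategy in
the grouped Menger game.  In particular, for any strictly increasing sequence
`i` with `i 0 = 0`, the ultrafilter is not covered by the sets
`U_{[i_{2k}, i_{2k+1})} ∩ U_{[i_{2k+1}, i_{2k+2})}`. -/
theorem ultrafilter_aliceWins_groupedMenger (U : Ultrafilter ℕ)
    (hfree : ∀ a ∈ U, a.Infinite) :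
    AliceWinningStrategyGroupedMenger
      ({f : ℕ → Bool | {n | f n = true} ∈ U}) ∧
    ∀ i : ℕ → ℕ, StrictMono i → i 0 = 0 →
      ∃ a ∈ U, ∀ k : ℕ,
        a ∩ Set.Ico (i (2 * k)) (i (2 * k + 1)) = ∅ ∨
        a ∩ Set.Ico (i (2 * k + 1)) (i (2 * k + 2)) = ∅ := by
  constructor
  · refine ⟨fun _ => 2, fun h => ufA U (h.foldl (ufBnd U) 0), fun _ => two_pos,
      fun h => ufA_cover U hfree _, ?_⟩
    classical
    intro F hF hcov
    -- the index sequence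
    have hFA : ∀ n, ↑(F n) ⊆ ufA U (ufSeq U F n) := fun n => hF n
    have hsub : ∀ n, ⋃₀ (F n : Set (Set (ufSpace U))) ⊆ ufV U (ufSeq U F n) (ufSeq U F (n + 1)) := by
      intro n
      rw [ufSeq_succ]
      exact ufBnd_spec U _ (hFA n)
    have hL : ∀ n, groupedL (fun _ => 2) F n = 2 * n := by
      intro n
      induction n with
      | zero => rfl
      | succ m ih =>
        have h2 : groupedL (fun _ => 2) F (m + 1) = groupedL (fun _ => 2) F m + 2 := rfl
        rw [h2, ih]; ring
    obtain ⟨a, haU, hakey⟩ := uf_key U (ufSeq U F) (ufSeq_strictMono U F)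
    obtain ⟨f, hfa⟩ : ∃ f : ℕ → Bool, {n | f n = true} = a :=
      ⟨fun n => decide (n ∈ a), by ext n; simp⟩
    have hfX : f ∈ ufSpace U := by rw [Set.mem_setOf_eq, hfa]; exact haU
    have := hcov ▸ Set.mem_univ (⟨f, hfX⟩ : ufSpace U)
    rw [Set.mem_iUnion] at this
    obtain ⟨n, hn⟩ := this
    rw [Set.mem_iInter₂] at hn
    have h1 : (⟨f, hfX⟩ : ufSpace U) ∈ ⋃₀ (F (2 * n) : Set (Set (ufSpace U))) := by
      have := hn (2 * n) (by rw [Finset.mem_Ico, hL, hL]; omega)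
      exact this
    have h2 : (⟨f, hfX⟩ : ufSpace U) ∈ ⋃₀ (F (2 * n + 1) : Set (Set (ufSpace U))) := by
      have := hn (2 * n + 1) (by rw [Finset.mem_Ico, hL, hL]; omega)
      exact this
    obtain ⟨j1, hj11, hj12, hj13⟩ := hsub (2 * n) h1
    obtain ⟨j2, hj21, hj22, hj23⟩ := hsub (2 * n + 1) h2
    have hj1a : j1 ∈ a := by rw [← hfa]; exact hj13
    have hj2a : j2 ∈ a := by rw [← hfa]; exact hj23
    rcases hakey n with h | h
    · rw [Set.eq_empty_iff_forall_notMem] at h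
      exact h j1 ⟨hj1a, hj11, hj12⟩
    · rw [Set.eq_empty_iff_forall_notMem] at h
      exact h j2 ⟨hj2a, hj21, hj22⟩
  · intro i hi _
    exact uf_key U i hi
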